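/- For every n ≥ 3, let I be the connected Grassmann necklace of 2-element subsets of [n] given by I_j = {j, j+1} for 1 ≤ j ≤ n−1 and I_n = {n, 1}. Then the interior size of I is n−3, and the number of maximal weakly separated collections over I (i.e., the number of vertices of the exchange graph G^I) equals the Catalan number C_{n−2}. In particular, for every i ≥ 0 there exists a connected Grassmann necklace with interior size i whose exchange graph has exactly C_{i+1} vertices. -/

import Mathlib

open SimpleGraph

namespace WS

/-- Integers (elements of the cyclically ordered set `[n]`, identified with `Fin n`)
are *cyclically ordered* if some rotation of the list is strictly increasing. -/
def CyclicallyOrdered {n : ℕ} (l : List (Fin n)) : Prop :=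
  ∃ k : ℕ, (l.rotate k).Pairwise (· < ·)

/-- Two subsets of `[n]` are *weakly separated*. -/
def WeaklySeparated {n : ℕ} (A B : Finset (Fin n)) : Prop :=
  ¬ ∃ a b a' b' : Fin n, CyclicallyOrdered [a, b, a', b'] ∧
      a ∈ A \ B ∧ a' ∈ A \ B ∧ b ∈ B \ A ∧ b' ∈ B \ A

/-- The cyclic successor `i + 1` in `[n]`. -/
def cnext {n : ℕ} (i : Fin n) : Fin n := i + ⟨1 % n, Nat.mod_lt 1 i.pos⟩

/-- A (connected) Grassmann necklace. -/
def IsGrassmannNecklace {n : ℕ} (N : Fin n → Finset (Fin n)) : Prop :=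
  (∀ i j : Fin n, (N i).card = (N j).card) ∧
    (∀ i : Fin n, cnext i ∈ N (cnext i)) ∧ ∀ i : Fin n, N i \ {i} ⊆ N (cnext i)

/-- The linear order `<ᵢ` on `[n]` starting at `i`. -/
def cyclicLT {n : ℕ} (i a b : Fin n) : Prop := (a - i).val < (b - i).val

instance {n : ℕ} (i a b : Fin n) : Decidable (cyclicLT i a b) :=
  inferInstanceAs (Decidable ((a - i).val < (b - i).val))

/-- The Gale order `≤ᵢ` : comparing the sorted lists elementwise w.r.t. `≤ᵢ`. -/
def FinsetLE {n : ℕ} (i : Fin n) (A B : Finset (Fin n)) : Prop :=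
  List.Forall₂ (· ≤ ·) (Finset.sort (A.image fun x => x - i) (· ≤ ·))
    (Finset.sort (B.image fun x => x - i) (· ≤ ·))

/-- The positroid associated to a Grassmann necklace. -/
def positroid {n : ℕ} (N : Fin n → Finset (Fin n)) : Set (Finset (Fin n)) :=
  {J | (∀ i, J.card = (N i).card) ∧ ∀ i, FinsetLE i (N i) J}

/-- A weakly separated collection. -/
def IsWSC {n : ℕ} (W : Finset (Finset (Fin n))) : Prop :=
  ∀ A ∈ W, ∀ B ∈ W, WeaklySeparated A B

/-- A weakly separated collection over a Grassmann necklace. -/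
def IsWSCOver {n : ℕ} (N : Fin n → Finset (Fin n)) (W : Finset (Finset (Fin n))) : Prop :=
  IsWSC W ∧ ∀ A ∈ W, A ∈ positroid N

/-- A maximal weakly separated collection over a Grassmann necklace. -/
def IsMaxWSCOver {n : ℕ} (N : Fin n → Finset (Fin n)) (W : Finset (Finset (Fin n))) : Prop :=
  IsWSCOver N W ∧ ∀ W', IsWSCOver N W' → W ⊆ W' → W' = W

/-- `V ∪ {a, b}`. -/
def pairAdd {n : ℕ} (V : Finset (Fin n)) (a b : Fin n) : Finset (Fin n) :=
  insert a (insert b V)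

/-- `V₂` is obtained from `V₁` by a mutation. -/
def Mutation {n : ℕ} (V1 V2 : Finset (Finset (Fin n))) : Prop :=
  ∃ (V : Finset (Fin n)) (a b c d : Fin n),
    CyclicallyOrdered [a, b, c, d] ∧ a ∉ V ∧ b ∉ V ∧ c ∉ V ∧ d ∉ V ∧
    pairAdd V a b ∈ V1 ∧ pairAdd V b c ∈ V1 ∧ pairAdd V c d ∈ V1 ∧
    pairAdd V d a ∈ V1 ∧ pairAdd V a c ∈ V1 ∧
    V2 = insert (pairAdd V b d) (V1.erase (pairAdd V a c))

/-- The type of maximal weakly separated collections over `N`. -/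
abbrev MWSC {n : ℕ} (N : Fin n → Finset (Fin n)) : Type :=
  {W : Finset (Finset (Fin n)) // IsMaxWSCOver N W}

/-- The exchange graph of a Grassmann necklace. -/
def exchangeGraph {n : ℕ} (N : Fin n → Finset (Fin n)) : SimpleGraph (MWSC N) :=
  SimpleGraph.fromRel fun V1 V2 => Mutation V1.1 V2.1

/-- The type of maximal weakly separated collections over `N` containing `C`. -/
abbrev CMWSC {n : ℕ} (N : Fin n → Finset (Fin n)) (C : Finset (Finset (Fin n))) : Type :=
  {W : Finset (Finset (Fin n)) // IsMaxWSCOver N W ∧ C ⊆ W}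

/-- The `C`-constant graph `G^I(C)` : the induced subgraph of the exchange graph
on the maximal weakly separated collections containing `C`. -/
def constantGraph {n : ℕ} (N : Fin n → Finset (Fin n)) (C : Finset (Finset (Fin n))) :
    SimpleGraph (CMWSC N C) :=
  SimpleGraph.fromRel fun V1 V2 => Mutation V1.1 V2.1

/-- The set of distinct subsets appearing in the necklace. -/
def necklaceSet {n : ℕ} (N : Fin n → Finset (Fin n)) : Finset (Finset (Fin n)) :=
  Finset.univ.image N

/-- The necklace `N` has interior size `c`. -/
def HasInteriorSize {n : ℕ} (N : Fin n → Finset (Fin n)) (c : ℕ) : Prop :=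
  ∀ W, IsMaxWSCOver N W → W.card = (necklaceSet N).card + c

/-- The `C`-constant graph `G^I(C)` has co-dimension `c`. -/
def HasCodim {n : ℕ} (N : Fin n → Finset (Fin n)) (C : Finset (Finset (Fin n))) (c : ℕ) :
    Prop :=
  ∀ W, IsMaxWSCOver N W → W.card = C.card + c

/-- Two `k`-element subsets are quasi-adjacent if their intersection has `k - 1` elements. -/
def QuasiAdjacent {n : ℕ} (A B : Finset (Fin n)) : Prop :=
  A.card = B.card ∧ (A ∩ B).card + 1 = A.card

/-- The `C`-constant graph `G^I(C)` is applicable. -/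
def Applicable {n : ℕ} (N : Fin n → Finset (Fin n)) (C : Finset (Finset (Fin n))) : Prop :=
  ∀ V ∈ C, ∃ l : List (Finset (Fin n)),
    l.head? = some V ∧ (∀ W ∈ l, W ∈ C) ∧ List.Chain' QuasiAdjacent l ∧
    ∃ W ∈ necklaceSet N, l.getLast? = some W

/-- The necklace `N` is mutation-friendly: the intersection of all maximal weakly separated
collections over `N` is exactly the necklace. -/
def MutationFriendly {n : ℕ} (N : Fin n → Finset (Fin n)) : Prop :=
  ∀ A : Finset (Fin n), (∀ W, IsMaxWSCOver N W → A ∈ W) ↔ A ∈ necklaceSet N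

/-- The `C`-constant graph `G^I(C)` is mutation-friendly. -/
def CMutationFriendly {n : ℕ} (N : Fin n → Finset (Fin n)) (C : Finset (Finset (Fin n))) :
    Prop :=
  ∀ A : Finset (Fin n), (∀ W, IsMaxWSCOver N W → C ⊆ W → A ∈ W) ↔ A ∈ C

/-- The necklace `N` is very-mutation-friendly. -/
def VeryMutationFriendly {n : ℕ} (N : Fin n → Finset (Fin n)) : Prop :=
  MutationFriendly N ∧
    ∀ i : ℕ, HasInteriorSize N i →
      ∃ W : ℕ → Finset (Finset (Fin n)),
        (∀ j, 1 ≤ j → j ≤ i - 1 →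
            IsWSCOver N (W j) ∧ necklaceSet N ⊆ W j ∧
            (W j).card + j = i + (necklaceSet N).card ∧
            Applicable N (W j) ∧ CMutationFriendly N (W j)) ∧
        ∀ j, 1 ≤ j → j + 1 ≤ i - 1 → W (j + 1) ⊆ W j

/-- The circular interval `[i, j)` in `[n]`. -/
def circInterval {n : ℕ} (i j : Fin n) : Finset (Fin n) :=
  Finset.univ.filter fun x => (x - i).val < (j - i).val

/-- A connected decorated permutation. -/
def IsConnectedPerm {n : ℕ} (π : Equiv.Perm (Fin n)) : Prop :=
  ¬ ∃ i j : Fin n, i ≠ j ∧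
      (circInterval i j).image (fun x => π x) = circInterval i j ∧
      (circInterval j i).image (fun x => π x) = circInterval j i

/-- The Grassmann necklace associated to a decorated permutation:
`I_i = {j : j <ᵢ π⁻¹(j)}`. -/
def necklaceOfPerm {n : ℕ} (π : Equiv.Perm (Fin n)) : Fin n → Finset (Fin n) :=
  fun i => Finset.univ.filter fun j => cyclicLT i j (π⁻¹ j)

/-- `π` is the decorated permutation associated to the necklace `N`:
`π(i) = j` whenever `I_{i+1} = (I_i ∖ {i}) ∪ {j}`. -/
def IsDecoratedPermOf {n : ℕ} (π : Equiv.Perm (Fin n)) (N : Fin n → Finset (Fin n)) : Prop :=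
  ∀ i : Fin n, N (cnext i) = insert (π i) ((N i).erase i)

/-- The label-reflection operation `LR^{2i}[π](j) = 2i - π⁻¹(2i - j)`. -/
def LRop {n : ℕ} [NeZero n] (i : Fin n) (π : Equiv.Perm (Fin n)) : Equiv.Perm (Fin n) :=
  ((Equiv.subLeft (i + i)).trans (π⁻¹ : Equiv.Perm (Fin n))).trans
    (Equiv.subLeft (i + i))

/-- The between-label-reflection operation `BLR^{2i-1}[π](j) = (2i-1) - π⁻¹((2i-1) - j)`. -/
def BLRop {n : ℕ} [NeZero n] (i : Fin n) (π : Equiv.Perm (Fin n)) : Equiv.Perm (Fin n) :=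
  ((Equiv.subLeft (i + i - 1)).trans (π⁻¹ : Equiv.Perm (Fin n))).trans
    (Equiv.subLeft (i + i - 1))

/-- The rotation operation `R^i[π](j) = π(j - i) + i`. -/
def Rop {n : ℕ} [NeZero n] (i : Fin n) (π : Equiv.Perm (Fin n)) : Equiv.Perm (Fin n) :=
  ((Equiv.subRight i).trans π).trans (Equiv.addRight i)

/-- One step in generating the equivalence class of decorated permutations. -/
def PermStep {n : ℕ} [NeZero n] (π σ : Equiv.Perm (Fin n)) : Prop :=
  σ = π⁻¹ ∨ (∃ i : Fin n, σ = LRop i π) ∨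
    (Even n ∧ ∃ i : Fin n, σ = BLRop i π) ∨ ∃ i : Fin n, σ = Rop i π

/-- Two decorated permutations belong to the same equivalence class. -/
def PermEquiv {n : ℕ} [NeZero n] (π σ : Equiv.Perm (Fin n)) : Prop :=
  Relation.EqvGen PermStep π σ

/-- `σ` is the permutation `π₁ = 312` (on `[3]`, in `Fin 3` coordinates). -/
def IsStandardPermOne (σ : Equiv.Perm (Fin 3)) : Prop :=
  σ 1 = 0 ∧ σ 2 = 1 ∧ σ 0 = 2

/-- `σ` is the permutation `π_c` on `[2c]` (for `c ≥ 2`), in `Fin (2c)` coordinates,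
where the element `a ∈ [2c]` corresponds to `a % 2c : Fin (2c)`. -/
def IsStandardPerm (c : ℕ) (hc : 2 ≤ c) (σ : Equiv.Perm (Fin (2 * c))) : Prop :=
  ∀ a : ℕ, 1 ≤ a → a ≤ 2 * c →
    σ ⟨a % (2 * c), Nat.mod_lt _ (by omega)⟩ =
      ⟨(if a = 1 then 3
        else if a ≤ c then 2 * c + 1 - a
        else if a = c + 1 then 1
        else if a = c + 2 then 2
        else 2 * c + 3 - a) % (2 * c), Nat.mod_lt _ (by omega)⟩

/-- The decorated permutation `π` (on `[n]`) belongs to the equivalence class `𝒞_c`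
of the permutation `π_c`. -/
def InStandardClass (c : ℕ) {n : ℕ} (π : Equiv.Perm (Fin n)) : Prop :=
  (c = 1 ∧ ∃ h : n = 3, ∃ σ : Equiv.Perm (Fin 3),
      IsStandardPermOne σ ∧ PermEquiv ((finCongr h).permCongr π) σ) ∨
    ∃ hc : 2 ≤ c, ∃ h : n = 2 * c, ∃ σ : Equiv.Perm (Fin (2 * c)),
      IsStandardPerm c hc σ ∧
      @PermEquiv (2 * c) ⟨by omega⟩ ((finCongr h).permCongr π) σ

/-- The embedding of the elements of `[n]` into `[n + m - 2]` used in gluing (the element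
`n` of `[n]`, i.e. `0 : Fin n`, is sent to the element `n` of `[n + m - 2]`). -/
def glueEmbed {n m : ℕ} (hn : 3 ≤ n) (hm : 3 ≤ m) (v : Fin n) : Fin (n + m - 2) :=
  if h : v.val = 0 then ⟨n, by omega⟩ else ⟨v.val, by have := v.isLt; omega⟩

/-- The shifted embedding `b ↦ b + n - 2` of the elements of `[m]` into `[n + m - 2]`
used in gluing (the element `m` of `[m]`, i.e. `0 : Fin m`, is sent to the element
`n + m - 2`, i.e. `0 : Fin (n + m - 2)`). -/
def glueShift {n m : ℕ} (hn : 3 ≤ n) (hm : 3 ≤ m) (v : Fin m) : Fin (n + m - 2) :=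
  if h : v.val = 0 then ⟨0, by omega⟩ else ⟨v.val + n - 2, by have := v.isLt; omega⟩

/-- `π₃` is the decorated permutation of the glued Grassmann necklace `I □ J`, where
`π₁, π₂` are the decorated permutations of `I, J`. -/
def IsGluedPerm {n m : ℕ} (hn : 3 ≤ n) (hm : 3 ≤ m)
    (π1 : Equiv.Perm (Fin n)) (π2 : Equiv.Perm (Fin m))
    (π3 : Equiv.Perm (Fin (n + m - 2))) : Prop :=
  (∀ a : Fin n, a.val ≠ 0 → (π1 a).val ≠ 0 →
      π3 (glueEmbed hn hm a) = glueEmbed hn hm (π1 a)) ∧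
  (∀ a : Fin n, a.val ≠ 0 → (π1 a).val = 0 →
      π3 (glueEmbed hn hm a) = glueShift hn hm (π2 ⟨1, by omega⟩)) ∧
  (∀ a : Fin m, (a.val = 0 ∨ 3 ≤ a.val) → π2 a ≠ ⟨1, by omega⟩ →
      π3 (glueShift hn hm a) = glueShift hn hm (π2 a)) ∧
  (∀ a : Fin m, (a.val = 0 ∨ 3 ≤ a.val) → π2 a = ⟨1, by omega⟩ →
      π3 (glueShift hn hm a) = glueEmbed hn hm (π1 ⟨0, by omega⟩))

/-- The box product of an arbitrary family of simple graphs. -/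
def boxProdFamily {ι : Type*} {V : ι → Type*} (G : ∀ i, SimpleGraph (V i)) :
    SimpleGraph (∀ i, V i) where
  Adj v w := ∃ j, (G j).Adj (v j) (w j) ∧ ∀ l, l ≠ j → v l = w l
  symm := by
    constructor
    rintro v w ⟨j, h, hl⟩
    exact ⟨j, h.symm, fun l hlj => (hl l hlj).symm⟩
  loopless := by
    constructor
    rintro v ⟨j, h, -⟩
    exact (G j).ne_of_adj h rfl

section Aux
variable {n : ℕ}
def Cross (A B : Finset (Fin n)) : Prop := ∃ a b a' b' : Fin n,
  a ∈ A \ B ∧ a' ∈ A \ B ∧ b ∈ B \ A ∧ b' ∈ B \ A ∧ a < b ∧ b < a' ∧ a' < b'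

lemma cyclicallyOrdered_iff (a b c d : Fin n) :
    CyclicallyOrdered [a,b,c,d] ↔
      (a<b∧b<c∧c<d) ∨ (b<c∧c<d∧d<a) ∨ (c<d∧d<a∧a<b) ∨ (d<a∧a<b∧b<c) := by
  constructor
  · rintro ⟨k, hk⟩
    have hlen : [a,b,c,d].length = 4 := rfl
    rw [← List.rotate_mod, hlen] at hk
    have h4 : k % 4 < 4 := Nat.mod_lt _ (by norm_num)
    have hrot : k % 4 = 0 ∨ k % 4 = 1 ∨ k % 4 = 2 ∨ k % 4 = 3 := by omega
    rcases hrot with h|h|h|h <;> rw [h] at hk <;>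
      [ (rw [show [a,b,c,d].rotate 0 = [a,b,c,d] from rfl] at hk);
        (rw [show [a,b,c,d].rotate 1 = [b,c,d,a] from rfl] at hk);
        (rw [show [a,b,c,d].rotate 2 = [c,d,a,b] from rfl] at hk);
        (rw [show [a,b,c,d].rotate 3 = [d,a,b,c] from rfl] at hk)] <;>
      simp only [List.pairwise_cons, List.mem_cons, List.mem_singleton, List.not_mem_nil,
        List.Pairwise.nil, and_true, List.pairwise_singleton, forall_eq_or_imp, forall_eq,
        Fin.lt_def] at hk <;>
      simp only [Fin.lt_def] <;> omega
  · rintro (⟨h1,h2,h3⟩|⟨h1,h2,h3⟩|⟨h1,h2,h3⟩|⟨h1,h2,h3⟩)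
    · exact ⟨0, by rw [show [a,b,c,d].rotate 0 = [a,b,c,d] from rfl]
                   simp only [List.pairwise_cons, List.mem_cons, List.mem_singleton,
                     List.not_mem_nil, List.Pairwise.nil, forall_eq_or_imp, forall_eq, and_true, false_implies, forall_true_iff, Fin.lt_def] at *; omega⟩
    · exact ⟨1, by rw [show [a,b,c,d].rotate 1 = [b,c,d,a] from rfl]
                   simp only [List.pairwise_cons, List.mem_cons, List.mem_singleton,
                     List.not_mem_nil, List.Pairwise.nil, forall_eq_or_imp, forall_eq, and_true, false_implies, forall_true_iff, Fin.lt_def] at *; omega⟩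
    · exact ⟨2, by rw [show [a,b,c,d].rotate 2 = [c,d,a,b] from rfl]
                   simp only [List.pairwise_cons, List.mem_cons, List.mem_singleton,
                     List.not_mem_nil, List.Pairwise.nil, forall_eq_or_imp, forall_eq, and_true, false_implies, forall_true_iff, Fin.lt_def] at *; omega⟩
    · exact ⟨3, by rw [show [a,b,c,d].rotate 3 = [d,a,b,c] from rfl]
                   simp only [List.pairwise_cons, List.mem_cons, List.mem_singleton,
                     List.not_mem_nil, List.Pairwise.nil, forall_eq_or_imp, forall_eq, and_true, false_implies, forall_true_iff, Fin.lt_def] at *; omega⟩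

lemma weaklySeparated_iff (A B : Finset (Fin n)) :
    WeaklySeparated A B ↔ ¬ Cross A B ∧ ¬ Cross B A := by
  unfold WeaklySeparated Cross
  constructor
  · intro h
    constructor
    · rintro ⟨a,b,a',b',ha,ha',hb,hb',l1,l2,l3⟩
      exact h ⟨a,b,a',b', (cyclicallyOrdered_iff _ _ _ _).2 (Or.inl ⟨l1,l2,l3⟩), ha, ha', hb, hb'⟩
    · rintro ⟨b,a,b',a',hb,hb',ha,ha',l1,l2,l3⟩
      exact h ⟨a',b,a,b', (cyclicallyOrdered_iff _ _ _ _).2 (Or.inr (Or.inl ⟨l1,l2,l3⟩)), ha', ha, hb, hb'⟩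
  · rintro ⟨h1,h2⟩ ⟨a,b,a',b', hc, ha, ha', hb, hb'⟩
    rcases (cyclicallyOrdered_iff _ _ _ _).1 hc with ⟨l1,l2,l3⟩|⟨l1,l2,l3⟩|⟨l1,l2,l3⟩|⟨l1,l2,l3⟩
    · exact h1 ⟨a,b,a',b',ha,ha',hb,hb',l1,l2,l3⟩
    · exact h2 ⟨b,a',b',a,hb,hb',ha',ha,l1,l2,l3⟩
    · exact h1 ⟨a',b',a,b,ha',ha,hb',hb,l1,l2,l3⟩
    · exact h2 ⟨b',a,b,a',hb',hb,ha,ha',l1,l2,l3⟩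

def NCFam (i j : Fin n) (W : Finset (Finset (Fin n))) : Prop :=
  (∀ e ∈ W, e.card = 2 ∧ ∀ x ∈ e, i ≤ x ∧ x ≤ j) ∧ ∀ e ∈ W, ∀ f ∈ W, ¬ Cross e f

def MaxNC (i j : Fin n) (W : Finset (Finset (Fin n))) : Prop :=
  NCFam i j W ∧ ∀ W', NCFam i j W' → W ⊆ W' → W' = W

lemma cross_self (e : Finset (Fin n)) : ¬ Cross e e := by
  rintro ⟨a,b,a',b',ha,-,-,-⟩; simp at ha

lemma pair_repr {e : Finset (Fin n)} (he : e.card = 2) : ∃ a b, a < b ∧ e = {a, b} := by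
  obtain ⟨a, b, hab, rfl⟩ := Finset.card_eq_two.1 he
  rcases lt_or_gt_of_ne hab with h | h
  · exact ⟨a, b, h, rfl⟩
  · exact ⟨b, a, h, Finset.pair_comm a b⟩

lemma card_pair_eq {f : Finset (Fin n)} (hf : f.card = 2) {b b' : Fin n}
    (hb : b ∈ f) (hb' : b' ∈ f) (hne : b ≠ b') : f = {b, b'} := by
  have hsub : ({b, b'} : Finset (Fin n)) ⊆ f := by
    intro x hx; simp at hx; rcases hx with rfl | rfl <;> assumption
  exact (Finset.eq_of_subset_of_card_le hsub (by rw [hf, Finset.card_pair hne])).symm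

/-- A "side" `{l, l+1}` crosses nothing. -/
lemma side_not_cross {l m : Fin n} (hm : m.val = l.val + 1) (f : Finset (Fin n)) :
    ¬ Cross {l, m} f ∧ ¬ Cross f {l, m} := by
  constructor
  · rintro ⟨a,b,a',b',ha,ha',hb,hb',l1,l2,l3⟩
    simp only [Finset.mem_sdiff, Finset.mem_insert, Finset.mem_singleton] at ha ha'
    rcases ha.1 with rfl | rfl <;> rcases ha'.1 with rfl | rfl <;>
      simp only [Fin.lt_def, hm] at l1 l2 l3 <;> omega
  · rintro ⟨a,b,a',b',ha,ha',hb,hb',l1,l2,l3⟩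
    simp only [Finset.mem_sdiff, Finset.mem_insert, Finset.mem_singleton] at hb hb'
    rcases hb.1 with rfl | rfl <;> rcases hb'.1 with rfl | rfl <;>
      simp only [Fin.lt_def, hm] at l1 l2 l3 <;> omega

/-- The full chord `{i, j}` crosses nothing lying inside `[i, j]`. -/
lemma full_not_cross {i j : Fin n} {f : Finset (Fin n)} (hf : ∀ x ∈ f, i ≤ x ∧ x ≤ j) :
    ¬ Cross {i, j} f ∧ ¬ Cross f {i, j} := by
  constructor
  · rintro ⟨a,b,a',b',ha,ha',hb,hb',l1,l2,l3⟩
    simp only [Finset.mem_sdiff, Finset.mem_insert, Finset.mem_singleton] at ha ha' hb hb'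
    have h1 := hf b hb.1; have h2 := hf b' hb'.1
    rcases ha.1 with rfl | rfl <;> rcases ha'.1 with rfl | rfl <;>
      simp only [Fin.lt_def, Fin.le_def] at l1 l2 l3 h1 h2 <;> omega
  · rintro ⟨a,b,a',b',ha,ha',hb,hb',l1,l2,l3⟩
    simp only [Finset.mem_sdiff, Finset.mem_insert, Finset.mem_singleton] at ha ha' hb hb'
    have h1 := hf a ha.1; have h2 := hf a' ha'.1
    rcases hb.1 with rfl | rfl <;> rcases hb'.1 with rfl | rfl <;>
      simp only [Fin.lt_def, Fin.le_def] at l1 l2 l3 h1 h2 <;> omega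

/-- Chords in separated intervals do not cross. -/
lemma sep_not_cross {k : Fin n} {e f : Finset (Fin n)} (he : ∀ x ∈ e, x ≤ k)
    (hf : ∀ x ∈ f, k ≤ x) : ¬ Cross e f ∧ ¬ Cross f e := by
  constructor
  · rintro ⟨a,b,a',b',ha,ha',hb,hb',l1,l2,l3⟩
    simp only [Finset.mem_sdiff] at ha' hb
    have h1 := he a' ha'.1; have h2 := hf b hb.1
    simp only [Fin.lt_def, Fin.le_def] at *; omega
  · rintro ⟨a,b,a',b',ha,ha',hb,hb',l1,l2,l3⟩
    simp only [Finset.mem_sdiff] at ha' hb'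
    have h1 := hf a' ha'.1; have h2 := he b' hb'.1
    simp only [Fin.lt_def, Fin.le_def] at *; omega

/-- Anything compatible with a maximal family is in it. -/
lemma mem_of_compat {i j : Fin n} {W : Finset (Finset (Fin n))} (hW : MaxNC i j W)
    {e : Finset (Fin n)} (he2 : e.card = 2) (heb : ∀ x ∈ e, i ≤ x ∧ x ≤ j)
    (hcc : ∀ f ∈ W, ¬ Cross e f ∧ ¬ Cross f e) : e ∈ W := by
  have hN : NCFam i j (insert e W) := by
    constructor
    · intro g hg; rcases Finset.mem_insert.1 hg with rfl | hg
      · exact ⟨he2, heb⟩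
      · exact hW.1.1 g hg
    · intro g hg f hf
      rcases Finset.mem_insert.1 hg with hge | hgW
      · rcases Finset.mem_insert.1 hf with hfe | hfW
        · rw [hge, hfe]; exact cross_self _
        · rw [hge]; exact (hcc f hfW).1
      · rcases Finset.mem_insert.1 hf with hfe | hfW
        · rw [hfe]; exact (hcc g hgW).2
        · exact hW.1.2 g hgW f hfW
  have := hW.2 _ hN (Finset.subset_insert _ _)
  rw [← this]; exact Finset.mem_insert_self _ _

lemma side_mem {i j : Fin n} {W : Finset (Finset (Fin n))} (hW : MaxNC i j W)
    {l m : Fin n} (hm : m.val = l.val + 1) (hl : i ≤ l) (hmj : m ≤ j) : {l, m} ∈ W := by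
  refine mem_of_compat hW ?_ ?_ (fun f _ => side_not_cross hm f)
  · exact Finset.card_pair (by simp [Fin.ext_iff]; omega)
  · intro x hx; simp only [Finset.mem_insert, Finset.mem_singleton] at hx
    rcases hx with rfl | rfl <;> simp only [Fin.le_def] at * <;> omega

lemma full_mem {i j : Fin n} {W : Finset (Finset (Fin n))} (hW : MaxNC i j W)
    (hij : i < j) : {i, j} ∈ W := by
  refine mem_of_compat hW ?_ ?_ (fun f hf => full_not_cross (fun x hx => (hW.1.1 f hf).2 x hx))
  · exact Finset.card_pair (ne_of_lt hij)
  · intro x hx; simp only [Finset.mem_insert, Finset.mem_singleton] at hx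
    rcases hx with rfl | rfl
    · exact ⟨le_refl _, le_of_lt hij⟩
    · exact ⟨le_of_lt hij, le_refl _⟩


lemma chord_cases {i k j : Fin n} (hik : i < k) (hkj : k < j) {e : Finset (Fin n)}
    (he2 : e.card = 2) (heb : ∀ x ∈ e, i ≤ x ∧ x ≤ j)
    (h1 : ¬ Cross {i, k} e) (h2 : ¬ Cross e {k, j}) :
    (∀ x ∈ e, x ≤ k) ∨ (∀ x ∈ e, k ≤ x) ∨ e = {i, j} := by
  obtain ⟨a, b, hab, rfl⟩ := pair_repr he2
  have hia : i.val ≤ a.val := (heb a (by simp)).1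
  have hbj : b.val ≤ j.val := (heb b (by simp)).2
  have haj : a.val ≤ j.val := (heb a (by simp)).2
  have hib : i.val ≤ b.val := (heb b (by simp)).1
  have hik' : i.val < k.val := hik
  have hkj' : k.val < j.val := hkj
  have hab' : a.val < b.val := hab
  by_cases hbk : b.val ≤ k.val
  · left; intro x hx; simp only [Finset.mem_insert, Finset.mem_singleton] at hx
    rcases hx with rfl | rfl <;> simp only [Fin.le_def] <;> omega
  · push_neg at hbk
    by_cases hka : k.val ≤ a.val
    · right; left; intro x hx; simp only [Finset.mem_insert, Finset.mem_singleton] at hx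
      rcases hx with rfl | rfl <;> simp only [Fin.le_def] <;> omega
    · push_neg at hka
      by_cases hai : a = i
      · subst hai
        by_cases hbj' : b = j
        · subst hbj'; right; right; rfl
        · exfalso
          have hbj2 : b.val < j.val := lt_of_le_of_ne hbj (by simpa [Fin.ext_iff] using hbj')
          refine h2 ⟨a, k, b, j, ?_, ?_, ?_, ?_, ?_, ?_, ?_⟩ <;>
            simp only [Finset.mem_sdiff, Finset.mem_insert, Finset.mem_singleton, not_or,
              Fin.ext_iff, Fin.lt_def, true_or, or_true, true_and, and_true] <;> omega
      · exfalso
        have hia2 : i.val < a.val := lt_of_le_of_ne hia (by simpa [Fin.ext_iff] using (Ne.symm hai))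
        refine h1 ⟨i, a, k, b, ?_, ?_, ?_, ?_, ?_, ?_, ?_⟩ <;>
          simp only [Finset.mem_sdiff, Finset.mem_insert, Finset.mem_singleton, not_or,
              Fin.ext_iff, Fin.lt_def, true_or, or_true, true_and, and_true] <;> omega

lemma compose_NCFam {i k j : Fin n} (hik : i < k) (hkj : k < j)
    {W₁ W₂ : Finset (Finset (Fin n))} (h1 : NCFam i k W₁) (h2 : NCFam k j W₂) :
    NCFam i j (W₁ ∪ W₂ ∪ {({i, j} : Finset (Fin n))}) := by
  have hij : i < j := lt_trans hik hkj
  have bounds : ∀ e ∈ W₁ ∪ W₂ ∪ {({i, j} : Finset (Fin n))},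
      e.card = 2 ∧ ∀ x ∈ e, i ≤ x ∧ x ≤ j := by
    intro e he
    simp only [Finset.mem_union, Finset.mem_singleton] at he
    rcases he with (he | he) | he
    · obtain ⟨hc, hb⟩ := h1.1 e he
      exact ⟨hc, fun x hx => ⟨(hb x hx).1, le_trans (hb x hx).2 hkj.le⟩⟩
    · obtain ⟨hc, hb⟩ := h2.1 e he
      exact ⟨hc, fun x hx => ⟨le_trans hik.le (hb x hx).1, (hb x hx).2⟩⟩
    · subst he
      refine ⟨Finset.card_pair (ne_of_lt hij), ?_⟩
      intro x hx; simp only [Finset.mem_insert, Finset.mem_singleton] at hx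
      rcases hx with rfl | rfl
      · exact ⟨le_refl _, hij.le⟩
      · exact ⟨hij.le, le_refl _⟩
  refine ⟨bounds, ?_⟩
  intro e he f hf
  have hbe := bounds e he; have hbf := bounds f hf
  simp only [Finset.mem_union, Finset.mem_singleton] at he hf
  rcases he with (he | he) | he <;> rcases hf with (hf | hf) | hf
  · exact h1.2 e he f hf
  · exact (sep_not_cross (fun x hx => (h1.1 e he).2 x hx |>.2)
      (fun x hx => (h2.1 f hf).2 x hx |>.1)).1
  · subst hf; exact (full_not_cross (fun x hx => hbe.2 x hx)).2
  · exact (sep_not_cross (fun x hx => (h1.1 f hf).2 x hx |>.2)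
      (fun x hx => (h2.1 e he).2 x hx |>.1)).2
  · exact h2.2 e he f hf
  · subst hf; exact (full_not_cross (fun x hx => hbe.2 x hx)).2
  · subst he; exact (full_not_cross (fun x hx => hbf.2 x hx)).1
  · subst he; exact (full_not_cross (fun x hx => hbf.2 x hx)).1
  · subst he; subst hf; exact cross_self _

lemma compose_max {i k j : Fin n} (hik : i < k) (hkj : k < j)
    {W₁ W₂ : Finset (Finset (Fin n))} (h1 : MaxNC i k W₁) (h2 : MaxNC k j W₂) :
    MaxNC i j (W₁ ∪ W₂ ∪ {({i, j} : Finset (Fin n))}) := by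
  refine ⟨compose_NCFam hik hkj h1.1 h2.1, ?_⟩
  intro W' hW' hsub
  refine Finset.Subset.antisymm ?_ hsub
  intro e he
  have hik1 : ({i, k} : Finset (Fin n)) ∈ W' := hsub (by
    simp only [Finset.mem_union]; exact Or.inl (Or.inl (full_mem h1 hik)))
  have hkj1 : ({k, j} : Finset (Fin n)) ∈ W' := hsub (by
    simp only [Finset.mem_union]; exact Or.inl (Or.inr (full_mem h2 hkj)))
  have hcases := chord_cases hik hkj (hW'.1 e he).1 (hW'.1 e he).2
    (hW'.2 _ hik1 e he) (hW'.2 e he _ hkj1)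
  simp only [Finset.mem_union, Finset.mem_singleton]
  rcases hcases with hc | hc | hc
  · refine Or.inl (Or.inl (mem_of_compat h1 (hW'.1 e he).1 ?_ ?_))
    · exact fun x hx => ⟨((hW'.1 e he).2 x hx).1, hc x hx⟩
    · intro f hf
      have hfW' : f ∈ W' := hsub (by simp only [Finset.mem_union]; exact Or.inl (Or.inl hf))
      exact ⟨hW'.2 e he f hfW', hW'.2 f hfW' e he⟩
  · refine Or.inl (Or.inr (mem_of_compat h2 (hW'.1 e he).1 ?_ ?_))
    · exact fun x hx => ⟨hc x hx, ((hW'.1 e he).2 x hx).2⟩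
    · intro f hf
      have hfW' : f ∈ W' := hsub (by simp only [Finset.mem_union]; exact Or.inl (Or.inr hf))
      exact ⟨hW'.2 e he f hfW', hW'.2 f hfW' e he⟩
  · exact Or.inr hc

lemma recover₁ {i k j : Fin n} (hik : i < k) (hkj : k < j)
    {W₁ W₂ : Finset (Finset (Fin n))} (h1 : MaxNC i k W₁) (h2 : MaxNC k j W₂) :
    (W₁ ∪ W₂ ∪ {({i, j} : Finset (Fin n))}).filter (fun e => ∀ x ∈ e, x ≤ k) = W₁ := by
  apply Finset.Subset.antisymm
  · intro e he
    rw [Finset.mem_filter] at he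
    obtain ⟨hmem, hle⟩ := he
    simp only [Finset.mem_union, Finset.mem_singleton] at hmem
    rcases hmem with (h | h) | h
    · exact h
    · exfalso
      obtain ⟨a, b, hab, rfl⟩ := pair_repr (h2.1.1 _ h).1
      have h1' := (h2.1.1 _ h).2 a (by simp) |>.1
      have h2' := hle b (by simp)
      have h3' := hle a (by simp)
      simp only [Fin.le_def, Fin.lt_def] at *
      omega
    · exfalso
      subst h
      have := hle j (by simp)
      simp only [Fin.le_def] at this
      have := hkj
      simp only [Fin.lt_def] at this
      omega
  · intro e he
    rw [Finset.mem_filter]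
    exact ⟨by simp only [Finset.mem_union]; exact Or.inl (Or.inl he),
      fun x hx => (h1.1.1 e he).2 x hx |>.2⟩

lemma recover₂ {i k j : Fin n} (hik : i < k) (hkj : k < j)
    {W₁ W₂ : Finset (Finset (Fin n))} (h1 : MaxNC i k W₁) (h2 : MaxNC k j W₂) :
    (W₁ ∪ W₂ ∪ {({i, j} : Finset (Fin n))}).filter (fun e => ∀ x ∈ e, k ≤ x) = W₂ := by
  apply Finset.Subset.antisymm
  · intro e he
    rw [Finset.mem_filter] at he
    obtain ⟨hmem, hle⟩ := he
    simp only [Finset.mem_union, Finset.mem_singleton] at hmem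
    rcases hmem with (h | h) | h
    · exfalso
      obtain ⟨a, b, hab, rfl⟩ := pair_repr (h1.1.1 _ h).1
      have h1' := (h1.1.1 _ h).2 b (by simp) |>.2
      have h2' := hle a (by simp)
      have h3' := hle b (by simp)
      simp only [Fin.le_def, Fin.lt_def] at *
      omega
    · exact h
    · exfalso
      subst h
      have := hle i (by simp)
      simp only [Fin.le_def] at this
      have := hik
      simp only [Fin.lt_def] at this
      omega
  · intro e he
    rw [Finset.mem_filter]
    exact ⟨by simp only [Finset.mem_union]; exact Or.inl (Or.inr he),
      fun x hx => (h2.1.1 e he).2 x hx |>.1⟩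


lemma base_unique {i j : Fin n} (hd : j.val = i.val + 1) {W : Finset (Finset (Fin n))}
    (hW : MaxNC i j W) : W = {({i, j} : Finset (Fin n))} := by
  apply Finset.Subset.antisymm
  · intro e he
    obtain ⟨a, b, hab, rfl⟩ := pair_repr (hW.1.1 e he).1
    have h1 := (hW.1.1 _ he).2 a (by simp)
    have h2 := (hW.1.1 _ he).2 b (by simp)
    have : a = i ∧ b = j := by
      simp only [Fin.le_def, Fin.lt_def, Fin.ext_iff] at *
      omega
    rw [this.1, this.2]; simp
  · intro e he
    simp only [Finset.mem_singleton] at he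
    subst he
    exact side_mem hW hd (le_refl _) (le_refl _)

lemma base_max {i j : Fin n} (hd : j.val = i.val + 1) :
    MaxNC i j {({i, j} : Finset (Fin n))} := by
  have hij : i < j := by simp only [Fin.lt_def]; omega
  constructor
  · constructor
    · intro e he; simp only [Finset.mem_singleton] at he; subst he
      refine ⟨Finset.card_pair (ne_of_lt hij), ?_⟩
      intro x hx; simp only [Finset.mem_insert, Finset.mem_singleton] at hx
      rcases hx with rfl | rfl
      · exact ⟨le_refl _, hij.le⟩
      · exact ⟨hij.le, le_refl _⟩
    · intro e he f hf; simp only [Finset.mem_singleton] at he hf; subst he; subst hf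
      exact cross_self _
  · intro W' hW' hsub
    apply Finset.Subset.antisymm _ hsub
    intro e he
    obtain ⟨a, b, hab, rfl⟩ := pair_repr (hW'.1 _ he).1
    have h1 := (hW'.1 _ he).2 a (by simp)
    have h2 := (hW'.1 _ he).2 b (by simp)
    have : a = i ∧ b = j := by
      simp only [Fin.le_def, Fin.lt_def, Fin.ext_iff] at *
      omega
    rw [this.1, this.2]; simp

lemma filter_max₁ {i k j : Fin n} (hik : i < k) (hkj : k < j)
    {W : Finset (Finset (Fin n))} (hW : MaxNC i j W)
    (hsplit : W = (W.filter fun e => ∀ x ∈ e, x ≤ k) ∪ (W.filter fun e => ∀ x ∈ e, k ≤ x)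
      ∪ {({i, j} : Finset (Fin n))}) :
    MaxNC i k (W.filter fun e => ∀ x ∈ e, x ≤ k) := by
  set W₁ := W.filter fun e => ∀ x ∈ e, x ≤ k with hW₁
  set W₂ := W.filter fun e => ∀ x ∈ e, k ≤ x with hW₂
  have hNC : NCFam i k W₁ := by
    constructor
    · intro e he
      rw [hW₁, Finset.mem_filter] at he
      exact ⟨(hW.1.1 e he.1).1, fun x hx => ⟨((hW.1.1 e he.1).2 x hx).1, he.2 x hx⟩⟩
    · intro e he f hf
      rw [hW₁, Finset.mem_filter] at he hf
      exact hW.1.2 e he.1 f hf.1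
  refine ⟨hNC, ?_⟩
  intro W₁' hW₁' hsub
  have hNC' : NCFam i j (W₁' ∪ W) := by
    constructor
    · intro e he
      rcases Finset.mem_union.1 he with he | he
      · exact ⟨(hW₁'.1 e he).1, fun x hx =>
          ⟨((hW₁'.1 e he).2 x hx).1, le_trans ((hW₁'.1 e he).2 x hx).2 hkj.le⟩⟩
      · exact hW.1.1 e he
    · intro e he f hf
      rcases Finset.mem_union.1 he with he | he <;> rcases Finset.mem_union.1 hf with hf | hf
      · exact hW₁'.2 e he f hf
      · -- e ∈ W₁', f ∈ W
        rw [hsplit] at hf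
        rcases Finset.mem_union.1 hf with hf' | hf'
        · rcases Finset.mem_union.1 hf' with hf'' | hf''
          · exact hW₁'.2 e he f (hsub hf'')
          · exact (sep_not_cross (fun x hx => ((hW₁'.1 e he).2 x hx).2)
              (fun x hx => (Finset.mem_filter.1 hf'').2 x hx)).1
        · simp only [Finset.mem_singleton] at hf'; subst hf'
          exact (full_not_cross (fun x hx =>
            ⟨((hW₁'.1 e he).2 x hx).1, le_trans ((hW₁'.1 e he).2 x hx).2 hkj.le⟩)).2
      · -- e ∈ W, f ∈ W₁'
        rw [hsplit] at he
        rcases Finset.mem_union.1 he with he' | he'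
        · rcases Finset.mem_union.1 he' with he'' | he''
          · exact hW₁'.2 e (hsub he'') f hf
          · exact (sep_not_cross (fun x hx => ((hW₁'.1 f hf).2 x hx).2)
              (fun x hx => (Finset.mem_filter.1 he'').2 x hx)).2
        · simp only [Finset.mem_singleton] at he'; subst he'
          exact (full_not_cross (fun x hx =>
            ⟨((hW₁'.1 f hf).2 x hx).1, le_trans ((hW₁'.1 f hf).2 x hx).2 hkj.le⟩)).1
      · exact hW.1.2 e he f hf
  have hWeq : W₁' ∪ W = W := hW.2 _ hNC' (Finset.subset_union_right)
  apply Finset.Subset.antisymm _ hsub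
  intro e he
  rw [hW₁, Finset.mem_filter]
  refine ⟨?_, fun x hx => ((hW₁'.1 e he).2 x hx).2⟩
  rw [← hWeq]
  exact Finset.mem_union_left _ he

lemma filter_max₂ {i k j : Fin n} (hik : i < k) (hkj : k < j)
    {W : Finset (Finset (Fin n))} (hW : MaxNC i j W)
    (hsplit : W = (W.filter fun e => ∀ x ∈ e, x ≤ k) ∪ (W.filter fun e => ∀ x ∈ e, k ≤ x)
      ∪ {({i, j} : Finset (Fin n))}) :
    MaxNC k j (W.filter fun e => ∀ x ∈ e, k ≤ x) := by
  set W₁ := W.filter fun e => ∀ x ∈ e, x ≤ k with hW₁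
  set W₂ := W.filter fun e => ∀ x ∈ e, k ≤ x with hW₂
  have hNC : NCFam k j W₂ := by
    constructor
    · intro e he
      rw [hW₂, Finset.mem_filter] at he
      exact ⟨(hW.1.1 e he.1).1, fun x hx => ⟨he.2 x hx, ((hW.1.1 e he.1).2 x hx).2⟩⟩
    · intro e he f hf
      rw [hW₂, Finset.mem_filter] at he hf
      exact hW.1.2 e he.1 f hf.1
  refine ⟨hNC, ?_⟩
  intro W₂' hW₂' hsub
  have hNC' : NCFam i j (W₂' ∪ W) := by
    constructor
    · intro e he
      rcases Finset.mem_union.1 he with he | he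
      · exact ⟨(hW₂'.1 e he).1, fun x hx =>
          ⟨le_trans hik.le ((hW₂'.1 e he).2 x hx).1, ((hW₂'.1 e he).2 x hx).2⟩⟩
      · exact hW.1.1 e he
    · intro e he f hf
      rcases Finset.mem_union.1 he with he | he <;> rcases Finset.mem_union.1 hf with hf | hf
      · exact hW₂'.2 e he f hf
      · rw [hsplit] at hf
        rcases Finset.mem_union.1 hf with hf' | hf'
        · rcases Finset.mem_union.1 hf' with hf'' | hf''
          · exact (sep_not_cross (fun x hx => (Finset.mem_filter.1 hf'').2 x hx)
              (fun x hx => ((hW₂'.1 e he).2 x hx).1)).2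
          · exact hW₂'.2 e he f (hsub hf'')
        · simp only [Finset.mem_singleton] at hf'; subst hf'
          exact (full_not_cross (fun x hx =>
            ⟨le_trans hik.le ((hW₂'.1 e he).2 x hx).1, ((hW₂'.1 e he).2 x hx).2⟩)).2
      · rw [hsplit] at he
        rcases Finset.mem_union.1 he with he' | he'
        · rcases Finset.mem_union.1 he' with he'' | he''
          · exact (sep_not_cross (fun x hx => (Finset.mem_filter.1 he'').2 x hx)
              (fun x hx => ((hW₂'.1 f hf).2 x hx).1)).1
          · exact hW₂'.2 e (hsub he'') f hf
        · simp only [Finset.mem_singleton] at he'; subst he'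
          exact (full_not_cross (fun x hx =>
            ⟨le_trans hik.le ((hW₂'.1 f hf).2 x hx).1, ((hW₂'.1 f hf).2 x hx).2⟩)).1
      · exact hW.1.2 e he f hf
  have hWeq : W₂' ∪ W = W := hW.2 _ hNC' (Finset.subset_union_right)
  apply Finset.Subset.antisymm _ hsub
  intro e he
  rw [hW₂, Finset.mem_filter]
  refine ⟨?_, fun x hx => ((hW₂'.1 e he).2 x hx).1⟩
  rw [← hWeq]
  exact Finset.mem_union_left _ he

lemma exists_split {i j : Fin n} {W : Finset (Finset (Fin n))} (hW : MaxNC i j W)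
    (hd : i.val + 2 ≤ j.val) :
    ∃ k : Fin n, i < k ∧ k < j ∧
      W = (W.filter fun e => ∀ x ∈ e, x ≤ k) ∪ (W.filter fun e => ∀ x ∈ e, k ≤ x)
        ∪ {({i, j} : Finset (Fin n))} := by
  classical
  have hjn : j.val < n := j.isLt
  set K := Finset.univ.filter
    (fun k : Fin n => i < k ∧ k < j ∧ ({k, j} : Finset (Fin n)) ∈ W) with hK
  have hKne : K.Nonempty := by
    refine ⟨⟨j.val - 1, by omega⟩, ?_⟩
    rw [hK, Finset.mem_filter]
    refine ⟨Finset.mem_univ _, ?_, ?_, ?_⟩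
    · exact Fin.lt_def.mpr (by show i.val < j.val - 1; omega)
    · exact Fin.lt_def.mpr (by show j.val - 1 < j.val; omega)
    · exact side_mem hW (by show j.val = j.val - 1 + 1; omega)
        (Fin.le_def.mpr (by show i.val ≤ j.val - 1; omega)) (le_refl _)
  set k := K.min' hKne with hk
  have hkK : k ∈ K := K.min'_mem hKne
  rw [hK, Finset.mem_filter] at hkK
  obtain ⟨-, hik, hkj, hkjW⟩ := hkK
  have hmin : ∀ k' : Fin n, i < k' → k' < j → ({k', j} : Finset (Fin n)) ∈ W → k ≤ k' := by
    intro k' h1 h2 h3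
    exact K.min'_le k' (by rw [hK, Finset.mem_filter]; exact ⟨Finset.mem_univ _, h1, h2, h3⟩)
  have hik' : i.val < k.val := hik
  have hkj' : k.val < j.val := hkj
  -- {i, k} is compatible with everything in W
  have hikW : ({i, k} : Finset (Fin n)) ∈ W := by
    refine mem_of_compat hW (Finset.card_pair (ne_of_lt hik)) ?_ ?_
    · intro x hx; simp only [Finset.mem_insert, Finset.mem_singleton] at hx
      rcases hx with rfl | rfl
      · exact ⟨le_refl _, by simp only [Fin.le_def]; omega⟩
      · exact ⟨hik.le, by simp only [Fin.le_def]; omega⟩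
    · intro f hf
      constructor
      · rintro ⟨a, b, a', b', ha, ha', hb, hb', l1, l2, l3⟩
        simp only [Finset.mem_sdiff, Finset.mem_insert, Finset.mem_singleton] at ha ha' hb hb'
        have hbf := (hW.1.1 f hf).2 b hb.1
        have hbf' := (hW.1.1 f hf).2 b' hb'.1
        have hbb' : b ≠ b' := by
          intro h; subst h
          simp only [Fin.lt_def] at l1 l2 l3; omega
        -- a = i, a' = k forced
        have hae : a = i ∧ a' = k := by
          rcases ha.1 with rfl | rfl <;> rcases ha'.1 with rfl | rfl <;>
            simp only [Fin.lt_def, Fin.le_def, Fin.ext_iff, true_and, and_true] at * <;>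
            first
              | (exfalso; omega)
              | exact ⟨rfl, rfl⟩
        obtain ⟨rfl, rfl⟩ := hae
        have hfeq : f = {b, b'} := card_pair_eq (hW.1.1 f hf).1 hb.1 hb'.1 hbb'
        by_cases hb'j : b' = j
        · subst hb'j
          have : k ≤ b := hmin b (by simp only [Fin.lt_def] at *; omega)
              (by simp only [Fin.lt_def, Fin.le_def] at *; omega) (by rw [← hfeq]; exact hf)
          simp only [Fin.lt_def, Fin.le_def] at *; omega
        · have hb'j2 : b'.val < j.val := by
            simp only [Fin.le_def] at hbf'
            rcases lt_of_le_of_ne hbf'.2 (by simpa [Fin.ext_iff] using hb'j) with h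
            exact h
          refine hW.1.2 f hf _ hkjW ⟨b, k, b', j, ?_, ?_, ?_, ?_, ?_, ?_, ?_⟩ <;>
            [skip; skip; skip; skip;
             (simp only [Fin.lt_def] at *; omega);
             (simp only [Fin.lt_def] at *; omega);
             (simp only [Fin.lt_def] at *; omega)] <;>
            simp only [Finset.mem_sdiff, Finset.mem_insert, Finset.mem_singleton, not_or,
              hfeq, Fin.ext_iff, true_or, or_true, true_and, and_true] <;>
            constructor <;>
            simp only [Fin.lt_def, Fin.le_def, Fin.ext_iff, not_or] at * <;> omega
      · rintro ⟨a, b, a', b', ha, ha', hb, hb', l1, l2, l3⟩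
        simp only [Finset.mem_sdiff, Finset.mem_insert, Finset.mem_singleton] at ha ha' hb hb'
        have haf := (hW.1.1 f hf).2 a ha.1
        rcases hb.1 with rfl | rfl <;> rcases hb'.1 with rfl | rfl <;>
          simp only [Fin.lt_def, Fin.le_def] at * <;> omega
  -- split
  refine ⟨k, hik, hkj, ?_⟩
  apply Finset.Subset.antisymm
  · intro e he
    have hcases := chord_cases hik hkj (hW.1.1 e he).1 (hW.1.1 e he).2
      (hW.1.2 _ hikW e he) (hW.1.2 e he _ hkjW)
    simp only [Finset.mem_union, Finset.mem_singleton, Finset.mem_filter]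
    rcases hcases with hc | hc | hc
    · exact Or.inl (Or.inl ⟨he, hc⟩)
    · exact Or.inl (Or.inr ⟨he, hc⟩)
    · exact Or.inr hc
  · intro e he
    simp only [Finset.mem_union, Finset.mem_singleton, Finset.mem_filter] at he
    rcases he with (he | he) | he
    · exact he.1
    · exact he.1
    · subst he; exact full_mem hW (hik.trans hkj)

lemma chord_le {i k j : Fin n} (hik : i < k) (hkj : k < j)
    {W₁ W₂ : Finset (Finset (Fin n))} (h1 : MaxNC i k W₁) (h2 : MaxNC k j W₂)
    {c : Fin n} (hic : i < c) (hcj : c < j)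
    (hmem : ({c, j} : Finset (Fin n)) ∈ W₁ ∪ W₂ ∪ {({i, j} : Finset (Fin n))}) : k ≤ c := by
  simp only [Finset.mem_union, Finset.mem_singleton] at hmem
  rcases hmem with (h | h) | h
  · exfalso
    have := (h1.1.1 _ h).2 j (by simp)
    simp only [Fin.le_def, Fin.lt_def] at *
    omega
  · exact (h2.1.1 _ h).2 c (by simp) |>.1
  · exfalso
    have : c ∈ ({i, j} : Finset (Fin n)) := h ▸ (by simp : c ∈ ({c, j} : Finset (Fin n)))
    simp only [Finset.mem_insert, Finset.mem_singleton, Fin.ext_iff] at this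
    simp only [Fin.lt_def] at *
    omega

lemma card_sigma' {ι : Type*} [Fintype ι] {f : ι → Type*} [∀ i, Finite (f i)] :
    Nat.card (Σ i, f i) = ∑ i, Nat.card (f i) := by
  letI : ∀ i, Fintype (f i) := fun i => Fintype.ofFinite _
  rw [Nat.card_eq_fintype_card, Fintype.card_sigma]
  exact Finset.sum_congr rfl fun i _ => (Nat.card_eq_fintype_card (α := f i)).symm

lemma main_count : ∀ d : ℕ, 1 ≤ d → ∀ i j : Fin n, j.val = i.val + d →
    (∀ W, MaxNC i j W → W.card = 2 * d - 1) ∧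
    Nat.card {W : Finset (Finset (Fin n)) // MaxNC i j W} = catalan (d - 1) := by
  intro d
  induction d using Nat.strong_induction_on with
  | _ d IH =>
    intro hd i j hij
    rcases eq_or_lt_of_le hd with hd1 | hd2
    · -- base case d = 1
      subst hd1
      constructor
      · intro W hW
        rw [base_unique (by omega) hW, Finset.card_singleton]
      · rw [show (1:ℕ) - 1 = 0 from rfl, catalan_zero, Nat.card_eq_one_iff_exists]
        exact ⟨⟨{({i, j} : Finset (Fin n))}, base_max (by omega)⟩,
          fun y => Subtype.ext (base_unique (by omega) y.2)⟩
    · -- inductive step d ≥ 2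
      have hd2' : 2 ≤ d := hd2
      classical
      set T := {k : Fin n // i < k ∧ k < j} with hT
      letI : Fintype T := Subtype.fintype _
      -- the composing map
      set F : (Σ k : T, {W₁ : Finset (Finset (Fin n)) // MaxNC i k.1 W₁} ×
          {W₂ : Finset (Finset (Fin n)) // MaxNC k.1 j W₂}) →
          {W : Finset (Finset (Fin n)) // MaxNC i j W} :=
        fun p => ⟨p.2.1.1 ∪ p.2.2.1 ∪ {({i, j} : Finset (Fin n))},
          compose_max p.1.2.1 p.1.2.2 p.2.1.2 p.2.2.2⟩ with hF
      have hFinj : Function.Injective F := by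
        rintro ⟨⟨k, hik, hkj⟩, ⟨W₁, h1⟩, ⟨W₂, h2⟩⟩ ⟨⟨k', hik', hkj'⟩, ⟨W₁', h1'⟩, ⟨W₂', h2'⟩⟩ hEq
        have hU : W₁ ∪ W₂ ∪ {({i, j} : Finset (Fin n))}
            = W₁' ∪ W₂' ∪ {({i, j} : Finset (Fin n))} := congrArg Subtype.val hEq
        have hkk' : k = k' := by
          have e1 : k' ≤ k := chord_le hik' hkj' h1' h2' hik hkj
            (hU ▸ (by simp only [Finset.mem_union]; exact Or.inl (Or.inr (full_mem h2 hkj))))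
          have e2 : k ≤ k' := chord_le hik hkj h1 h2 hik' hkj'
            (hU.symm ▸ (by simp only [Finset.mem_union]; exact Or.inl (Or.inr (full_mem h2' hkj'))))
          exact le_antisymm e2 e1
        subst hkk'
        have hW1 : W₁ = W₁' := by
          rw [← recover₁ hik hkj h1 h2, ← recover₁ hik hkj h1' h2', hU]
        have hW2 : W₂ = W₂' := by
          rw [← recover₂ hik hkj h1 h2, ← recover₂ hik hkj h1' h2', hU]
        subst hW1; subst hW2
        rfl
      have hFsurj : Function.Surjective F := by
        rintro ⟨W, hW⟩
        obtain ⟨k, hik, hkj, hsplit⟩ := exists_split hW (by omega)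
        exact ⟨⟨⟨k, hik, hkj⟩,
          ⟨W.filter fun e => ∀ x ∈ e, x ≤ k, filter_max₁ hik hkj hW hsplit⟩,
          ⟨W.filter fun e => ∀ x ∈ e, k ≤ x, filter_max₂ hik hkj hW hsplit⟩⟩,
          Subtype.ext hsplit.symm⟩
      have hEquiv := Equiv.ofBijective F ⟨hFinj, hFsurj⟩
      constructor
      · -- cardinality of each maximal family
        intro W hW
        obtain ⟨k, hik, hkj, hsplit⟩ := exists_split hW (by omega)
        set W₁ := W.filter fun e => ∀ x ∈ e, x ≤ k with hW₁d
        set W₂ := W.filter fun e => ∀ x ∈ e, k ≤ x with hW₂d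
        have h1 := filter_max₁ hik hkj hW hsplit
        have h2 := filter_max₂ hik hkj hW hsplit
        have hik' : i.val < k.val := hik
        have hkj' : k.val < j.val := hkj
        set d₁ := k.val - i.val with hd₁
        set d₂ := j.val - k.val with hd₂
        have hc1 : W₁.card = 2 * d₁ - 1 :=
          (IH d₁ (by omega) (by omega) i k (by omega)).1 W₁ h1
        have hc2 : W₂.card = 2 * d₂ - 1 :=
          (IH d₂ (by omega) (by omega) k j (by omega)).1 W₂ h2
        have hdisj1 : Disjoint W₁ W₂ := by
          rw [Finset.disjoint_left]
          intro e he1 he2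
          obtain ⟨a, b, hab, rfl⟩ := pair_repr (hW.1.1 e (Finset.mem_filter.1 he1).1).1
          have q1 := (Finset.mem_filter.1 he1).2 b (by simp)
          have q2 := (Finset.mem_filter.1 he2).2 a (by simp)
          simp only [Fin.le_def, Fin.lt_def] at *
          omega
        have hnotin : ({i, j} : Finset (Fin n)) ∉ W₁ ∪ W₂ := by
          intro h
          rcases Finset.mem_union.1 h with h | h
          · have := (Finset.mem_filter.1 h).2 j (by simp)
            simp only [Fin.le_def] at this; omega
          · have := (Finset.mem_filter.1 h).2 i (by simp)
            simp only [Fin.le_def] at this; omega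
        rw [hsplit, Finset.card_union_of_disjoint (by
            rw [Finset.disjoint_right]
            intro e he
            simp only [Finset.mem_singleton] at he
            subst he
            exact hnotin),
          Finset.card_union_of_disjoint hdisj1, Finset.card_singleton, hc1, hc2]
        omega
      · -- counting
        rw [← Nat.card_congr hEquiv, card_sigma']
        have hterm : ∀ k : T, Nat.card ({W₁ : Finset (Finset (Fin n)) // MaxNC i k.1 W₁} ×
            {W₂ : Finset (Finset (Fin n)) // MaxNC k.1 j W₂})
            = catalan (k.1.val - i.val - 1) * catalan (j.val - k.1.val - 1) := by
          rintro ⟨k, hik, hkj⟩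
          have hik' : i.val < k.val := hik
          have hkj' : k.val < j.val := hkj
          rw [Nat.card_prod]
          rw [(IH (k.val - i.val) (by omega) (by omega) i k (by omega)).2,
            (IH (j.val - k.val) (by omega) (by omega) k j (by omega)).2]
        rw [Finset.sum_congr rfl (fun k _ => hterm k)]
        -- reindex
        obtain ⟨m, rfl⟩ : ∃ m, d = m + 2 := ⟨d - 2, by omega⟩
        have hjn : j.val < n := j.isLt
        have hsum : ∑ k : T, catalan (k.1.val - i.val - 1) * catalan (j.val - k.1.val - 1)
            = ∑ t : Fin (m + 1), catalan t.val * catalan (m - t.val) := by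
          refine (Fintype.sum_bijective
            (fun t : Fin (m + 1) => (⟨⟨i.val + 1 + t.val, by omega⟩,
              Fin.lt_def.mpr (by show i.val < i.val + 1 + t.val; omega),
              Fin.lt_def.mpr (by show i.val + 1 + t.val < j.val; omega)⟩ : T))
            ⟨?_, ?_⟩ _ _ ?_).symm
          · intro t t' h
            have := congrArg (fun x : T => x.1.val) h
            simp only at this
            exact Fin.ext (by omega)
          · rintro ⟨k, hik, hkj⟩
            have h1 : i.val < k.val := hik
            have h2 : k.val < j.val := hkj
            refine ⟨⟨k.val - i.val - 1, by omega⟩, ?_⟩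
            apply Subtype.ext
            apply Fin.ext
            show i.val + 1 + (k.val - i.val - 1) = k.val
            omega
          · intro t
            have ht : t.val ≤ m := by omega
            show catalan t.val * catalan (m - t.val)
              = catalan (i.val + 1 + t.val - i.val - 1) * catalan (j.val - (i.val + 1 + t.val) - 1)
            congr 1 <;> congr 1 <;> omega
        rw [hsum]
        show _ = catalan (m + 2 - 1)
        rw [show m + 2 - 1 = m + 1 from rfl, catalan_succ]

lemma cnext_val {n : ℕ} (hn : 2 ≤ n) (j : Fin n) :
    (cnext j).val = if j.val + 1 < n then j.val + 1 else 0 := by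
  show ((j + ⟨1 % n, _⟩ : Fin n)).val = _
  rw [Fin.add_def]
  simp only [Nat.mod_eq_of_lt (show 1 < n by omega)]
  have hj : j.val < n := j.isLt
  split
  · exact Nat.mod_eq_of_lt (by omega)
  · have : j.val + 1 = n := by omega
    rw [this, Nat.mod_self]

lemma cnext_ne {n : ℕ} (hn : 2 ≤ n) (j : Fin n) : j ≠ cnext j := by
  intro h
  have := congrArg Fin.val h
  rw [cnext_val hn] at this
  have hj : j.val < n := j.isLt
  split at this <;> omega

lemma sub_self_eq_zero' {n : ℕ} [NeZero n] (i : Fin n) : i - i = 0 := sub_self i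

lemma cnext_sub {n : ℕ} (hn : 2 ≤ n) (i : Fin n) :
    haveI : NeZero n := ⟨by omega⟩
    cnext i - i = (1 : Fin n) := by
  haveI : NeZero n := ⟨by omega⟩
  show (i + ⟨1 % n, _⟩) - i = (1 : Fin n)
  rw [add_sub_cancel_left]
  apply Fin.ext
  rw [Fin.val_one']

lemma sort_pair {n : ℕ} {u v : Fin n} (huv : u < v) :
    Finset.sort ({u, v} : Finset (Fin n)) (· ≤ ·) = [u, v] := by
  rw [Finset.sort_insert (· ≤ ·) (fun b hb => by
      simp only [Finset.mem_singleton] at hb; subst hb; exact huv.le)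
    (by simp only [Finset.mem_singleton]; exact ne_of_lt huv), Finset.sort_singleton]


lemma aux_mem_positroid (hn : 3 ≤ n) (J : Finset (Fin n)) :
    J ∈ positroid (fun j : Fin n => ({j, cnext j} : Finset (Fin n))) ↔ J.card = 2 := by
  haveI : NeZero n := ⟨by omega⟩
  constructor
  · intro h
    rw [h.1 ⟨0, by omega⟩, Finset.card_pair (cnext_ne (by omega) _)]
  · intro hJ
    refine ⟨fun i => by rw [hJ, Finset.card_pair (cnext_ne (by omega) i)], fun i => ?_⟩
    unfold FinsetLE
    have himg : (({i, cnext i} : Finset (Fin n)).image (fun x => x - i))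
        = ({0, 1} : Finset (Fin n)) := by
      rw [Finset.image_insert, Finset.image_singleton, sub_self, cnext_sub (by omega)]
    have hJinj : Function.Injective (fun x : Fin n => x - i) :=
      fun a b h => by rwa [sub_left_inj] at h
    have hJcard : (J.image (fun x => x - i)).card = 2 := by
      rw [Finset.card_image_of_injective _ hJinj, hJ]
    obtain ⟨u, v, huv, heq⟩ := pair_repr hJcard
    have h01 : (0 : Fin n) < 1 := by
      rw [Fin.lt_def, Fin.val_zero, Fin.val_one', Nat.mod_eq_of_lt (show 1 < n by omega)]
      omega
    rw [himg, heq, sort_pair h01, sort_pair huv]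
    refine List.Forall₂.cons ?_ (List.Forall₂.cons ?_ List.Forall₂.nil)
    · exact Fin.le_def.mpr (by rw [Fin.val_zero]; omega)
    · refine Fin.le_def.mpr ?_
      rw [Fin.val_one', Nat.mod_eq_of_lt (show 1 < n by omega)]
      have := Fin.lt_def.mp huv
      have hvn : v.val < n := v.isLt
      omega

lemma aux_isWSCOver_iff (hn : 3 ≤ n) (W : Finset (Finset (Fin n))) :
    IsWSCOver (fun j : Fin n => ({j, cnext j} : Finset (Fin n))) W ↔
      NCFam (⟨0, by omega⟩ : Fin n) (⟨n - 1, by omega⟩ : Fin n) W := by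
  constructor
  · rintro ⟨hws, hpos⟩
    constructor
    · intro e he
      refine ⟨(aux_mem_positroid hn e).1 (hpos e he), fun x hx => ⟨?_, ?_⟩⟩
      · exact Fin.le_def.mpr (Nat.zero_le _)
      · exact Fin.le_def.mpr (by have := x.isLt; show x.val ≤ n - 1; omega)
    · intro e he f hf
      exact ((weaklySeparated_iff e f).1 (hws e he f hf)).1
  · rintro ⟨hb, hnc⟩
    exact ⟨fun A hA B hB => (weaklySeparated_iff A B).2 ⟨hnc A hA B hB, hnc B hB A hA⟩,
      fun A hA => (aux_mem_positroid hn A).2 (hb A hA).1⟩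

lemma aux_isMaxWSCOver_iff (hn : 3 ≤ n) (W : Finset (Finset (Fin n))) :
    IsMaxWSCOver (fun j : Fin n => ({j, cnext j} : Finset (Fin n))) W ↔
      MaxNC (⟨0, by omega⟩ : Fin n) (⟨n - 1, by omega⟩ : Fin n) W := by
  unfold IsMaxWSCOver MaxNC
  rw [aux_isWSCOver_iff hn]
  constructor
  · rintro ⟨h1, h2⟩
    exact ⟨h1, fun W' hW' hsub => h2 W' ((aux_isWSCOver_iff hn W').2 hW') hsub⟩
  · rintro ⟨h1, h2⟩
    exact ⟨h1, fun W' hW' hsub => h2 W' ((aux_isWSCOver_iff hn W').1 hW') hsub⟩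

lemma aux_neckset_card (hn : 3 ≤ n) :
    (necklaceSet (fun j : Fin n => ({j, cnext j} : Finset (Fin n)))).card = n := by
  have hinj : Function.Injective (fun j : Fin n => ({j, cnext j} : Finset (Fin n))) := by
    intro a b h
    simp only at h
    have ha : a ∈ ({b, cnext b} : Finset (Fin n)) := h ▸ Finset.mem_insert_self a _
    have hbm : b ∈ ({a, cnext a} : Finset (Fin n)) := h.symm ▸ Finset.mem_insert_self b _
    simp only [Finset.mem_insert, Finset.mem_singleton] at ha hbm
    rcases ha with rfl | ha
    · rfl
    · rcases hbm with rfl | hbm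
      · rfl
      · exfalso
        have h1 := congrArg Fin.val ha
        have h2 := congrArg Fin.val hbm
        rw [cnext_val (by omega)] at h1 h2
        have h3 : a.val < n := a.isLt
        have h4 : b.val < n := b.isLt
        split at h1 <;> split at h2 <;> omega
  rw [necklaceSet, Finset.card_image_of_injective _ hinj, Finset.card_univ, Fintype.card_fin]

lemma aux_necklace_is (hn : 3 ≤ n) :
    IsGrassmannNecklace (fun j : Fin n => ({j, cnext j} : Finset (Fin n))) := by
  refine ⟨fun i j => ?_, fun i => ?_, fun i => ?_⟩
  · rw [Finset.card_pair (cnext_ne (by omega) i), Finset.card_pair (cnext_ne (by omega) j)]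
  · exact Finset.mem_insert_self _ _
  · intro x hx
    rw [Finset.mem_sdiff] at hx
    obtain ⟨hx1, hx2⟩ := hx
    simp only [Finset.mem_insert, Finset.mem_singleton] at hx1 hx2 ⊢
    rcases hx1 with rfl | rfl
    · exact absurd rfl hx2
    · exact Or.inl rfl

lemma aux_interior (hn : 3 ≤ n) :
    HasInteriorSize (fun j : Fin n => ({j, cnext j} : Finset (Fin n))) (n - 3) := by
  intro W hW
  have hc := (main_count (n - 1) (by omega) (⟨0, by omega⟩ : Fin n) (⟨n - 1, by omega⟩ : Fin n)
    (by show n - 1 = 0 + (n - 1); omega)).1 W ((aux_isMaxWSCOver_iff hn W).1 hW)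
  rw [aux_neckset_card hn, hc]
  omega

lemma aux_count (hn : 3 ≤ n) :
    Nat.card (MWSC (fun j : Fin n => ({j, cnext j} : Finset (Fin n)))) = catalan (n - 2) := by
  have e : MWSC (fun j : Fin n => ({j, cnext j} : Finset (Fin n)))
      ≃ {W : Finset (Finset (Fin n)) //
          MaxNC (⟨0, by omega⟩ : Fin n) (⟨n - 1, by omega⟩ : Fin n) W} :=
    Equiv.subtypeEquivRight (fun W => aux_isMaxWSCOver_iff hn W)
  rw [Nat.card_congr e, (main_count (n - 1) (by omega) _ _
    (by show n - 1 = 0 + (n - 1); omega)).2]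
  congr 1

end Aux

theorem triangulation_catalan (n : ℕ) (hn : 3 ≤ n) :
    IsGrassmannNecklace (fun j : Fin n => ({j, cnext j} : Finset (Fin n))) ∧
    HasInteriorSize (fun j : Fin n => ({j, cnext j} : Finset (Fin n))) (n - 3) ∧
    Nat.card (MWSC (fun j : Fin n => ({j, cnext j} : Finset (Fin n)))) = catalan (n - 2) ∧
    ∀ i : ℕ, ∃ (m : ℕ) (M : Fin m → Finset (Fin m)),
      3 ≤ m ∧ IsGrassmannNecklace M ∧ (∀ l, 2 ≤ (M l).card) ∧
      HasInteriorSize M i ∧ Nat.card (MWSC M) = catalan (i + 1) := by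
  refine ⟨aux_necklace_is hn, aux_interior hn, aux_count hn, ?_⟩
  intro i
  refine ⟨i + 3, (fun j : Fin (i + 3) => ({j, cnext j} : Finset (Fin (i + 3)))),
    by omega, aux_necklace_is (by omega), ?_, ?_, ?_⟩
  · intro l
    rw [Finset.card_pair (cnext_ne (by omega) l)]
  · have h := aux_interior (n := i + 3) (by omega)
    rwa [show i + 3 - 3 = i from by omega] at h
  · have h := aux_count (n := i + 3) (by omega)
    rwa [show i + 3 - 2 = i + 1 from by omega] at h

end WS
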